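/- For all nonnegative integers m, n with n ≥ m and all complex numbers w₁, w₂, one has H_{m,n}(w₁,w₂) = (-1)ᵐ m! w₂^{n-m} L_m^{(n-m)}(w₁ w₂). -/
import Mathlib


noncomputable def H2 (m n : ℕ) (z₁ z₂ : ℂ) : ℂ :=
  ∑ k ∈ Finset.range (min m n + 1),
    (-1 : ℂ) ^ k * (Nat.factorial k) * (Nat.choose m k) * (Nat.choose n k) *
      z₁ ^ (m - k) * z₂ ^ (n - k)

/-- Generalized Laguerre polynomial `L_n^{(α)}(x)`, with integer parameter `α`,
defined via `L_n^{(α)}(x) = ∑_{k=0}^n (-x)^k/k! · (∏_{i=k+1}^n (α+i)) / (n-k)!`,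
which agrees with `∑_k (-1)^k C(n+α, n-k) x^k/k!` when `n + α ≥ 0`. -/
noncomputable def lagC (n : ℕ) (α : ℤ) (x : ℂ) : ℂ :=
  ∑ k ∈ Finset.range (n + 1),
    (-x) ^ k / (Nat.factorial k) *
      ((∏ i ∈ Finset.Icc (k + 1) n, ((α : ℂ) + (i : ℕ))) / (Nat.factorial (n - k)))

lemma fact_prod (a b : ℕ) (hab : a ≤ b) :
    a.factorial * ∏ i ∈ Finset.Icc (a + 1) b, i = b.factorial := by
  induction b, hab using Nat.le_induction with
  | base => simp
  | succ b hb ih =>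
    rw [Finset.prod_Icc_succ_top (by omega), ← mul_assoc, ih, Nat.factorial_succ, mul_comm]

lemma prod_eval (k m n : ℕ) (hk : k ≤ m) (h : m ≤ n) :
    (∏ i ∈ Finset.Icc (k + 1) m, ((((n : ℤ) - m : ℤ) : ℂ) + (i : ℕ)))
      = (n.factorial : ℂ) / ((n - m + k).factorial : ℂ) := by
  obtain ⟨c, rfl⟩ : ∃ c, n = c + m := ⟨n - m, by omega⟩
  simp only [Nat.add_sub_cancel]
  have h1 : ∀ i ∈ Finset.Icc (k + 1) m,
      ((((c + m : ℕ) : ℤ) - m : ℤ) : ℂ) + (i : ℕ) = ((c + i : ℕ) : ℂ) := by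
    intro i hi; push_cast; ring
  rw [Finset.prod_congr rfl h1, ← Nat.cast_prod]
  have h2 : ∏ i ∈ Finset.Icc (k + 1) m, (c + i) = ∏ j ∈ Finset.Icc (c + k + 1) (c + m), j := by
    rw [show c + k + 1 = c + (k + 1) by ring, ← Finset.map_add_left_Icc, Finset.prod_map]
    rfl
  have h3 := fact_prod (c + k) (c + m) (by omega)
  rw [h2, eq_div_iff (by exact_mod_cast (c + k).factorial_ne_zero)]
  push_cast [← h3]
  ring

lemma choose_cast (N K : ℕ) (h : K ≤ N) :
    (Nat.choose N K : ℂ) = (N.factorial : ℂ) / (K.factorial * (N - K).factorial) := by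
  rw [eq_div_iff (mul_ne_zero (Nat.cast_ne_zero.mpr K.factorial_ne_zero)
    (Nat.cast_ne_zero.mpr (N - K).factorial_ne_zero))]
  push_cast [← Nat.choose_mul_factorial_mul_factorial h]
  ring

theorem H2_eq_laguerre_of_le (m n : ℕ) (h : m ≤ n) (w₁ w₂ : ℂ) :
    H2 m n w₁ w₂ = (-1 : ℂ) ^ m * (Nat.factorial m) * w₂ ^ (n - m) *
      lagC m ((n : ℤ) - m) (w₁ * w₂) := by
  unfold H2 lagC
  rw [min_eq_left h, Finset.mul_sum, ← Finset.sum_range_reflect]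
  refine Finset.sum_congr rfl ?_
  intro j hj
  have hjm : j ≤ m := by simpa [Nat.lt_succ_iff] using hj
  simp only [Nat.add_sub_cancel]
  rw [prod_eval j m n hjm h, Nat.choose_symm hjm,
    choose_cast m j hjm, choose_cast n (m - j) (le_trans (by omega) h),
    show n - (m - j) = n - m + j by omega,
    show m - (m - j) = j by omega,
    show (-(w₁ * w₂)) ^ j = (-1 : ℂ) ^ j * w₁ ^ j * w₂ ^ j by rw [neg_pow, mul_pow]; ring,
    show ((-1 : ℂ)) ^ (m - j) = (-1 : ℂ) ^ (m + j) by
      rw [show m + j = (m - j) + 2 * j by omega, pow_add, pow_mul]; simp,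
    show w₂ ^ (n - m + j) = w₂ ^ (n - m) * w₂ ^ j from pow_add w₂ (n - m) j]
  have hfj : (j.factorial : ℂ) ≠ 0 := Nat.cast_ne_zero.mpr j.factorial_ne_zero
  have hfmj : ((m - j).factorial : ℂ) ≠ 0 := Nat.cast_ne_zero.mpr (m - j).factorial_ne_zero
  have hfnj : ((n - m + j).factorial : ℂ) ≠ 0 := Nat.cast_ne_zero.mpr (n - m + j).factorial_ne_zero
  field_simp
  ring
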